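/- Let r ≥ 2 and let Γ ⊆ (ℕ ∪ {∞})^r be the tropical semiring generated by v_1, …, v_r with (v_i)_i = ∞ and (v_i)_j = 1 for j ≠ i. Then κ = (r−1, …, r−1) is the conductor of Γ: every element of (ℕ∪{∞})^r that is componentwise ≥ κ belongs to Γ, while for each standard basis vector e_i the element κ − e_i does not belong to Γ. -/

import Mathlib

/-- The tropical sub-semiring of `(ℕ∪{∞})^r` generated by a set `G`:
the smallest subset containing `0` and `G`, closed under componentwise
addition and componentwise minimum. -/
def tropGen {r : ℕ} (G : Set (Fin r → ℕ∞)) : Set (Fin r → ℕ∞) :=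
  ⋂₀ {S : Set (Fin r → ℕ∞) | 0 ∈ S ∧ G ⊆ S ∧
      (∀ a ∈ S, ∀ b ∈ S, a + b ∈ S) ∧
      (∀ a ∈ S, ∀ b ∈ S, (fun i => min (a i) (b i)) ∈ S)}

/-- `κ = (r−1, …, r−1)` is the conductor of the value semiring of an ordinary
singular point with `r ≥ 2` branches: everything componentwise `≥ κ` lies in the
semiring, while `κ − e_i` does not, for every `i`. -/
theorem conductor_ordinary_point (r : ℕ) (hr : 2 ≤ r) :
    (∀ δ : Fin r → ℕ∞,
        (∀ i, ((r - 1 : ℕ) : ℕ∞) ≤ δ i) →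
        δ ∈ tropGen (Set.range (fun i : Fin r => fun j : Fin r =>
          if j = i then (⊤ : ℕ∞) else 1))) ∧
      (∀ i : Fin r,
        (fun j => if j = i then ((r - 2 : ℕ) : ℕ∞) else ((r - 1 : ℕ) : ℕ∞)) ∉
          tropGen (Set.range (fun i : Fin r => fun j : Fin r =>
            if j = i then (⊤ : ℕ∞) else 1))) := by
  have hrpos : 0 < r := by omega
  haveI : NeZero r := ⟨by omega⟩
  haveI hnt : Nontrivial (Fin r) := Fin.nontrivial_iff_two_le.mpr hr
  set v : Fin r → (Fin r → ℕ∞) := fun i j => if j = i then (⊤ : ℕ∞) else 1 with hv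
  constructor
  · -- Part 1
    intro δ hδ
    refine Set.mem_sInter.mpr ?_
    intro S hS
    obtain ⟨h0, hG, hadd, hmin⟩ := hS
    have hvS : ∀ i, v i ∈ S := fun i => hG ⟨i, rfl⟩
    -- closure under pointwise inf
    have hinfS : ∀ (t : Finset (Fin r)) (H : t.Nonempty) (f : Fin r → (Fin r → ℕ∞)),
        (∀ i ∈ t, f i ∈ S) → t.inf' H f ∈ S := by
      intro t H f hf
      refine Finset.inf'_mem S ?_ t H f hf
      intro x hx y hy
      have : x ⊓ y = fun i => min (x i) (y i) := by
        funext i; simp [Pi.inf_apply]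
      rw [this]; exact hmin x hx y hy
    -- closure under finite sums
    have hsumS : ∀ (t : Finset (Fin r)) (f : Fin r → (Fin r → ℕ∞)),
        (∀ i ∈ t, f i ∈ S) → (∑ i ∈ t, f i) ∈ S := by
      intro t f hf
      exact Finset.sum_induction f (· ∈ S) (fun a b ha hb => hadd a ha b hb) h0 hf
    have hne : (Finset.univ : Finset (Fin r)).Nonempty := Finset.univ_nonempty
    -- constant vectors are in S
    have hconstTop : (fun _ : Fin r => (⊤ : ℕ∞)) ∈ S := by
      have h1 : (∑ i ∈ Finset.univ, v i) ∈ S := hsumS _ _ (fun i _ => hvS i)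
      have h2 : (∑ i ∈ Finset.univ, v i) = (fun _ : Fin r => (⊤ : ℕ∞)) := by
        funext k
        rw [Finset.sum_apply]
        refine (WithTop.sum_eq_top (M := ℕ)).mpr ?_
        exact ⟨k, Finset.mem_univ k, by simp [hv]; rfl⟩
      rwa [h2] at h1
    have hconstNat : ∀ m : ℕ, (fun _ : Fin r => (m : ℕ∞)) ∈ S := by
      intro m
      induction m with
      | zero =>
        have : (fun _ : Fin r => ((0 : ℕ) : ℕ∞)) = 0 := by funext k; simp
        rw [this]; exact h0
      | succ m ih =>
        have h1 : Finset.univ.inf' hne (fun i => v i + (fun _ => (m : ℕ∞))) ∈ S :=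
          hinfS _ hne _ (fun i _ => hadd _ (hvS i) _ ih)
        have h2 : Finset.univ.inf' hne (fun i => v i + (fun _ => (m : ℕ∞)))
            = (fun _ : Fin r => ((m + 1 : ℕ) : ℕ∞)) := by
          funext k
        -- value at k : min over i of (v i k + m)
          rw [Finset.inf'_apply]
          apply le_antisymm
          · obtain ⟨i, hik⟩ := exists_ne k
            refine le_trans (Finset.inf'_le _ (Finset.mem_univ i)) ?_
            have hv1 : v i k = 1 := if_neg fun h => hik h.symm
            simp only [Pi.add_apply, hv1]
            push_cast
            rw [add_comm]
          · refine Finset.le_inf' _ _ ?_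
            intro i _
            have h1le : (1 : ℕ∞) ≤ v i k := by
              by_cases hki : k = i <;> simp [hv, hki]
            simp only [Pi.add_apply]
            have : ((m + 1 : ℕ) : ℕ∞) = 1 + (m : ℕ∞) := by push_cast; ring
            rw [this]
            exact add_le_add_left h1le _
        rwa [h2] at h1
    have hconst : ∀ c : ℕ∞, (fun _ : Fin r => c) ∈ S := by
      intro c
      cases c with
      | top => exact hconstTop
      | coe m => exact hconstNat m
    -- the vectors F j : value δ j at j, ⊤ elsewhere
    have hF : ∀ j : Fin r, (fun k => if k = j then δ j else (⊤ : ℕ∞)) ∈ S := by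
      intro j
      have h1 : (∑ i ∈ Finset.univ.erase j, v i) ∈ S := hsumS _ _ (fun i _ => hvS i)
      have h2 := hadd _ h1 _ (hconst (δ j - ((r - 1 : ℕ) : ℕ∞)))
      have h3 : ((∑ i ∈ Finset.univ.erase j, v i) + (fun _ => δ j - ((r - 1 : ℕ) : ℕ∞)))
          = (fun k => if k = j then δ j else (⊤ : ℕ∞)) := by
        funext k
        simp only [Pi.add_apply, Finset.sum_apply]
        by_cases hk : k = j
        · subst hk
          have hterms : ∀ i ∈ Finset.univ.erase k, v i k = 1 := by
            intro i hi
            have : i ≠ k := Finset.ne_of_mem_erase hi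
            exact if_neg fun h => this h.symm
          rw [Finset.sum_congr rfl hterms, Finset.sum_const,
            Finset.card_erase_of_mem (Finset.mem_univ k), Finset.card_univ,
            Fintype.card_fin]
          simp only [eq_self_iff_true, if_true, nsmul_eq_mul, mul_one]
          exact add_tsub_cancel_of_le (hδ k)
        · have htop : ∑ i ∈ Finset.univ.erase j, v i k = ⊤ := by
            refine (WithTop.sum_eq_top (M := ℕ)).mpr ?_
            exact ⟨k, Finset.mem_erase.mpr ⟨hk, Finset.mem_univ k⟩, by simp [hv]; rfl⟩
          rw [htop, top_add, if_neg hk]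
      rw [h3] at h2; exact h2
    -- δ is the pointwise inf of the F j
    have h1 : Finset.univ.inf' hne (fun j => fun k => if k = j then δ j else (⊤ : ℕ∞)) ∈ S :=
      hinfS _ hne _ (fun j _ => hF j)
    have h2 : Finset.univ.inf' hne (fun j => fun k => if k = j then δ j else (⊤ : ℕ∞)) = δ := by
      funext k
      rw [Finset.inf'_apply]
      apply le_antisymm
      · refine le_trans (Finset.inf'_le _ (Finset.mem_univ k)) ?_
        simp
      · refine Finset.le_inf' _ _ ?_
        intro j _
        by_cases hkj : k = j
        · subst hkj; simp
        · simp [hkj]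
    rwa [h2] at h1
  · -- Part 2
    intro i hmem
    classical
    set Q : Set (Fin r → ℕ∞) :=
      {δ | ∀ k, (r : ℕ∞) ≤ δ k + ((Finset.univ.filter (fun j => δ j ≤ δ k)).card : ℕ∞)} with hQdef
    have hQ : Q ∈ {S : Set (Fin r → ℕ∞) | 0 ∈ S ∧
        Set.range (fun i : Fin r => fun j : Fin r => if j = i then (⊤ : ℕ∞) else 1) ⊆ S ∧
        (∀ a ∈ S, ∀ b ∈ S, a + b ∈ S) ∧
        (∀ a ∈ S, ∀ b ∈ S, (fun i => min (a i) (b i)) ∈ S)} := by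
      refine ⟨?_, ?_, ?_, ?_⟩
      · -- 0 ∈ Q
        intro k
        have : (Finset.univ.filter (fun j : Fin r => (0 : Fin r → ℕ∞) j ≤ (0 : Fin r → ℕ∞) k))
            = Finset.univ := by
          refine Finset.filter_true_of_mem ?_
          intro j _; simp
        simp [this, Finset.card_univ]
      · -- generators in Q
        rintro x ⟨i0, rfl⟩ k
        show (r : ℕ∞) ≤ (if k = i0 then (⊤ : ℕ∞) else 1) +
          ((Finset.univ.filter
            (fun j => (if j = i0 then (⊤ : ℕ∞) else 1) ≤
              (if k = i0 then (⊤ : ℕ∞) else 1))).card : ℕ∞)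
        by_cases hk : k = i0
        · subst hk
          simp
        · have hval : (if k = i0 then (⊤ : ℕ∞) else 1) = 1 := if_neg hk
          have hfilter : (Finset.univ.filter
              (fun j : Fin r => (if j = i0 then (⊤ : ℕ∞) else 1) ≤ 1))
                = Finset.univ.erase i0 := by
            rw [← Finset.filter_ne' Finset.univ i0]
            refine Finset.filter_congr ?_
            intro j _
            by_cases hj : j = i0 <;> simp [hj]
          rw [hval, hfilter, Finset.card_erase_of_mem (Finset.mem_univ i0),
            Finset.card_univ, Fintype.card_fin]
          have : ((r : ℕ) : ℕ∞) = ((1 + (r - 1) : ℕ) : ℕ∞) := by congr 1; omega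
          rw [this]
          push_cast
          rfl
      · -- closed under addition
        intro a ha b hb k
        set A := Finset.univ.filter (fun j => a j ≤ a k) with hA
        set B := Finset.univ.filter (fun j => b j ≤ b k) with hB
        set C := Finset.univ.filter (fun j => (a + b) j ≤ (a + b) k) with hC
        have hsub : A ∩ B ⊆ C := by
          intro j hj
          rw [Finset.mem_inter, hA, hB, Finset.mem_filter, Finset.mem_filter] at hj
          rw [hC, Finset.mem_filter]
          exact ⟨Finset.mem_univ j, add_le_add hj.1.2 hj.2.2⟩
        have hcard : A.card + B.card ≤ (A ∩ B).card + r := by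
          have h1 := Finset.card_union_add_card_inter A B
          have h2 : (A ∪ B).card ≤ r := by
            have := Finset.card_le_univ (A ∪ B)
            simpa [Finset.card_univ] using this
          omega
        have hcard2 : (A ∩ B).card + r ≤ C.card + r :=
          add_le_add_left (Finset.card_le_card hsub) r
        have key : (r : ℕ∞) + (r : ℕ∞) ≤ ((a + b) k + (C.card : ℕ∞)) + (r : ℕ∞) := by
          calc (r : ℕ∞) + (r : ℕ∞) ≤ (a k + (A.card : ℕ∞)) + (b k + (B.card : ℕ∞)) :=
                add_le_add (ha k) (hb k)
            _ = (a k + b k) + ((A.card + B.card : ℕ) : ℕ∞) := by push_cast; ring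
            _ ≤ (a k + b k) + ((C.card + r : ℕ) : ℕ∞) := by
                refine add_le_add_right ?_ _
                exact_mod_cast le_trans hcard hcard2
            _ = ((a + b) k + (C.card : ℕ∞)) + (r : ℕ∞) := by
                rw [Pi.add_apply]; push_cast; ring
        exact (WithTop.add_le_add_iff_right (WithTop.coe_ne_top (a := r))).mp key
      · -- closed under min
        intro a ha b hb k
        show (r : ℕ∞) ≤ min (a k) (b k) +
          ((Finset.univ.filter (fun j => min (a j) (b j) ≤ min (a k) (b k))).card : ℕ∞)
        rcases le_total (a k) (b k) with h | h
        · have hck : min (a k) (b k) = a k := min_eq_left h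
          have hsub : Finset.univ.filter (fun j => a j ≤ a k) ⊆
              Finset.univ.filter (fun j => min (a j) (b j) ≤ min (a k) (b k)) := by
            intro j hj
            rw [Finset.mem_filter] at hj ⊢
            exact ⟨Finset.mem_univ j, by rw [hck]; exact le_trans (min_le_left _ _) hj.2⟩
          calc (r : ℕ∞) ≤ a k + ((Finset.univ.filter (fun j => a j ≤ a k)).card : ℕ∞) := ha k
            _ ≤ a k + (((Finset.univ.filter
                (fun j => min (a j) (b j) ≤ min (a k) (b k))).card : ℕ∞)) :=
                add_le_add_right (by exact_mod_cast Finset.card_le_card hsub) _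
            _ = min (a k) (b k) + _ := by rw [hck]
        · have hck : min (a k) (b k) = b k := min_eq_right h
          have hsub : Finset.univ.filter (fun j => b j ≤ b k) ⊆
              Finset.univ.filter (fun j => min (a j) (b j) ≤ min (a k) (b k)) := by
            intro j hj
            rw [Finset.mem_filter] at hj ⊢
            exact ⟨Finset.mem_univ j, by rw [hck]; exact le_trans (min_le_right _ _) hj.2⟩
          calc (r : ℕ∞) ≤ b k + ((Finset.univ.filter (fun j => b j ≤ b k)).card : ℕ∞) := hb k
            _ ≤ b k + (((Finset.univ.filter
                (fun j => min (a j) (b j) ≤ min (a k) (b k))).card : ℕ∞)) :=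
                add_le_add_right (by exact_mod_cast Finset.card_le_card hsub) _
            _ = min (a k) (b k) + _ := by rw [hck]
    have hin := Set.mem_sInter.mp hmem Q hQ
    have hcontra : (r : ℕ∞) ≤ ((r - 2 : ℕ) : ℕ∞) +
        ((Finset.univ.filter (fun j =>
          (if j = i then ((r - 2 : ℕ) : ℕ∞) else ((r - 1 : ℕ) : ℕ∞)) ≤
            (if i = i then ((r - 2 : ℕ) : ℕ∞) else ((r - 1 : ℕ) : ℕ∞)))).card : ℕ∞) := by
      have h := hin i
      simp only [Set.mem_setOf_eq] at h
      simpa using h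
    have hfilter : (Finset.univ.filter (fun j =>
        (if j = i then ((r - 2 : ℕ) : ℕ∞) else ((r - 1 : ℕ) : ℕ∞)) ≤
          (if i = i then ((r - 2 : ℕ) : ℕ∞) else ((r - 1 : ℕ) : ℕ∞)))).card ≤ 1 := by
      have hsub : (Finset.univ.filter (fun j =>
          (if j = i then ((r - 2 : ℕ) : ℕ∞) else ((r - 1 : ℕ) : ℕ∞)) ≤
            (if i = i then ((r - 2 : ℕ) : ℕ∞) else ((r - 1 : ℕ) : ℕ∞)))) ⊆ {i} := by
        intro j hj
        rw [Finset.mem_filter] at hj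
        rw [Finset.mem_singleton]
        by_contra hji
        rw [if_neg hji, if_pos rfl, Nat.cast_le] at hj
        omega
      simpa using Finset.card_le_card hsub
    have hfin : (r : ℕ∞) ≤ ((r - 2 : ℕ) : ℕ∞) + ((1 : ℕ) : ℕ∞) :=
      le_trans hcontra (add_le_add_right (by exact_mod_cast hfilter) _)
    have : (r : ℕ∞) ≤ ((r - 2 + 1 : ℕ) : ℕ∞) := by push_cast; exact_mod_cast hfin
    rw [Nat.cast_le] at this
    omega
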